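/- Let n : ℕ. For Z ∈ (Fin n → ℂ) set q(Z) = ∑_i (Z i)² and ξ(Z) = (fun i => 2 * Complex.I * Z i, 1 + q(Z), Complex.I * (1 − q(Z))) ∈ (Fin n → ℂ) × ℂ × ℂ. Define b(v) = ∑_{i} (v₁ i)² + v₂² + v₃² for v = (v₁,v₂,v₃), and h(v) = ∑_i ‖v₁ i‖² − ‖v₂‖² − ‖v₃‖². Then for every Z: (a) b(ξ(Z)) = 0; (b) h(ξ(Z)) = 4 * ∑_i ‖Z i‖² − 2 − 2 * ‖q(Z)‖²; in particular h(ξ(Z)) < 0 if and only if 1 + ‖q(Z)‖² − 2 * ∑_i ‖Z i‖² > 0. -/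

import Mathlib

/-- Harish-Chandra embedding `ξ` of `ℂⁿ` into the quadric for `SO(n,2)`: `ξ(Z)` is `b`-null,
and `h(ξ(Z)) = 4∑‖Zᵢ‖² − 2 − 2‖q(Z)‖²`, so `h(ξ(Z)) < 0 ↔ 1 + ‖q(Z)‖² − 2∑‖Zᵢ‖² > 0`. -/
theorem stmt_9 (n : ℕ)
    (q : (Fin n → ℂ) → ℂ) (hq : ∀ Z, q Z = ∑ i, (Z i) ^ 2)
    (ξ : (Fin n → ℂ) → (Fin n → ℂ) × ℂ × ℂ)
    (hξ : ∀ Z, ξ Z = (fun i => 2 * Complex.I * Z i, 1 + q Z, Complex.I * (1 - q Z)))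
    (b : (Fin n → ℂ) × ℂ × ℂ → ℂ)
    (hb : ∀ v, b v = (∑ i, (v.1 i) ^ 2) + v.2.1 ^ 2 + v.2.2 ^ 2)
    (h : (Fin n → ℂ) × ℂ × ℂ → ℝ)
    (hh : ∀ v, h v = (∑ i, ‖v.1 i‖ ^ 2) - ‖v.2.1‖ ^ 2 - ‖v.2.2‖ ^ 2)
    (Z : Fin n → ℂ) :
    b (ξ Z) = 0 ∧
    h (ξ Z) = 4 * (∑ i, ‖Z i‖ ^ 2) - 2 - 2 * ‖q Z‖ ^ 2 ∧
    (h (ξ Z) < 0 ↔ 1 + ‖q Z‖ ^ 2 - 2 * ∑ i, ‖Z i‖ ^ 2 > 0) := by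
  have hs : ∑ i, (2 * Complex.I * Z i) ^ 2 = -4 * q Z := by
    rw [hq, Finset.mul_sum]
    refine Finset.sum_congr rfl fun i _ => ?_
    have := Complex.I_sq
    ring_nf
    rw [Complex.I_sq]; ring
  have hmain : h (ξ Z) = 4 * (∑ i, ‖Z i‖ ^ 2) - 2 - 2 * ‖q Z‖ ^ 2 := by
    rw [hh, hξ]
    simp only [norm_mul, Complex.norm_I, Complex.norm_ofNat, mul_one, one_mul, mul_pow]
    have h1 : ∑ i : Fin n, (2:ℝ)^2 * ‖Z i‖ ^ 2 = 4 * ∑ i, ‖Z i‖ ^ 2 := by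
      rw [Finset.mul_sum]; norm_num
    have h2 : ‖1 + q Z‖ ^ 2 + ‖1 - q Z‖ ^ 2 = 2 + 2 * ‖q Z‖ ^ 2 := by
      simp only [Complex.sq_norm, Complex.normSq_apply, Complex.add_re,
        Complex.add_im, Complex.sub_re, Complex.sub_im, Complex.one_re, Complex.one_im]
      ring
    linarith [h1, h2]
  refine ⟨?_, hmain, ?_⟩
  · rw [hb, hξ]
    simp only
    rw [hs]
    have : (Complex.I * (1 - q Z)) ^ 2 = -(1 - q Z)^2 := by
      rw [mul_pow, Complex.I_sq]; ring
    rw [this]; ring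
  · rw [hmain]; constructor <;> intro <;> linarith
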